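/- In the deep fully connected ReLU network covariance recursion with σ_w² > 2, define c_l = (σ_w²/2)^l and κ^{(l)} = K^{(l)}/c_l. Then the diagonal entries converge: κ^{(l)}(x,x) → v_x² where v_x = [σ_b²/(σ_w²/2 − 1) + K^{(0)}(x,x)]^{1/2}, and moreover κ^{(l)}(x,x') → v_x v_{x'} for all pairs, i.e. K^{(l)}/c_l → v vᵀ, a rank-one matrix. -/

import Mathlib

/-- The ReLU arc-cosine correlation mapping. -/
noncomputable def arcCosCorr (ρ : ℝ) : ℝ :=
  (1 / Real.pi) * (Real.sin (Real.arccos ρ) + (Real.pi - Real.arccos ρ) * ρ)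

lemma aux_sin_strict {θ : ℝ} (h0 : 0 < θ) (h1 : θ ≤ Real.pi) :
    θ * Real.cos θ < Real.sin θ := by
  rcases lt_or_ge θ (Real.pi / 2) with h | h
  · have hc : 0 < Real.cos θ := Real.cos_pos_of_mem_Ioo ⟨by linarith [Real.pi_pos], h⟩
    have ht := Real.lt_tan h0 h
    rw [Real.tan_eq_sin_div_cos] at ht
    have := mul_lt_mul_of_pos_right ht hc
    rwa [div_mul_cancel₀ _ hc.ne'] at this
  · have hc : Real.cos θ ≤ 0 :=
      Real.cos_nonpos_of_pi_div_two_le_of_le h (by linarith [Real.pi_pos])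
    have hs : 0 ≤ Real.sin θ := Real.sin_nonneg_of_nonneg_of_le_pi h0.le h1
    rcases eq_or_lt_of_le hs with he | hl
    · have hc2 : Real.cos θ = -1 := by nlinarith [Real.sin_sq_add_cos_sq θ]
      rw [hc2, ← he]; nlinarith
    · nlinarith

lemma aux_sin {θ : ℝ} (h0 : 0 ≤ θ) (h1 : θ ≤ Real.pi) :
    θ * Real.cos θ ≤ Real.sin θ := by
  rcases eq_or_lt_of_le h0 with he | hl
  · simp [← he]
  · exact (aux_sin_strict hl h1).le

lemma arcCosCorr_repr {ρ : ℝ} (h1 : -1 ≤ ρ) (h2 : ρ ≤ 1) :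
    arcCosCorr ρ = (1 / Real.pi) * (Real.sin (Real.arccos ρ) +
      (Real.pi - Real.arccos ρ) * Real.cos (Real.arccos ρ)) := by
  rw [arcCosCorr, Real.cos_arccos h1 h2]

lemma arcCosCorr_one : arcCosCorr 1 = 1 := by
  rw [arcCosCorr, Real.arccos_one]
  simp [Real.pi_ne_zero]

lemma arcCosCorr_nonneg {ρ : ℝ} (h1 : -1 ≤ ρ) (h2 : ρ ≤ 1) : 0 ≤ arcCosCorr ρ := by
  rw [arcCosCorr_repr h1 h2]
  have hπ := Real.pi_pos
  have hθπ := Real.arccos_le_pi ρ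
  have hθ0 := Real.arccos_nonneg ρ
  have h := aux_sin (θ := Real.pi - Real.arccos ρ) (by linarith) (by linarith)
  rw [Real.cos_pi_sub, Real.sin_pi_sub] at h
  have : 0 ≤ Real.sin (Real.arccos ρ) + (Real.pi - Real.arccos ρ) * Real.cos (Real.arccos ρ) := by
    nlinarith
  positivity

lemma arcCosCorr_le_one {ρ : ℝ} (h2 : ρ ≤ 1) : arcCosCorr ρ ≤ 1 := by
  rw [arcCosCorr]
  have hπ := Real.pi_pos
  have hθπ := Real.arccos_le_pi ρ
  have hθ0 := Real.arccos_nonneg ρ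
  have hs := Real.sin_le hθ0
  have h2' : (Real.pi - Real.arccos ρ) * ρ ≤ (Real.pi - Real.arccos ρ) * 1 :=
    mul_le_mul_of_nonneg_left h2 (by linarith)
  rw [one_div, ← div_eq_inv_mul, div_le_one hπ]
  nlinarith

lemma lt_arcCosCorr {ρ : ℝ} (h1 : -1 ≤ ρ) (h2 : ρ < 1) : ρ < arcCosCorr ρ := by
  rw [arcCosCorr]
  have hπ := Real.pi_pos
  have hθπ := Real.arccos_le_pi ρ
  have hθ0 : 0 < Real.arccos ρ := Real.arccos_pos.mpr h2
  have h := aux_sin_strict hθ0 hθπ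
  rw [Real.cos_arccos h1 h2.le] at h
  rw [one_div, ← div_eq_inv_mul, lt_div_iff₀ hπ]
  nlinarith

lemma le_arcCosCorr {ρ : ℝ} (h1 : -1 ≤ ρ) (h2 : ρ ≤ 1) : ρ ≤ arcCosCorr ρ := by
  rcases eq_or_lt_of_le h2 with he | hl
  · rw [he, arcCosCorr_one]
  · exact (lt_arcCosCorr h1 hl).le

lemma continuous_arcCosCorr : Continuous arcCosCorr := by
  unfold arcCosCorr
  exact continuous_const.mul (((Real.continuous_sin.comp Real.continuous_arccos).add
    (((continuous_const.sub Real.continuous_arccos)).mul continuous_id)))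

set_option maxHeartbeats 1000000 in
/-- for the deep fully connected ReLU network covariance recursion with
`σ_w² > 2`, letting `c_l = (σ_w²/2)^l` and `v_x = √(σ_b²/(σ_w²/2 - 1) + K⁰(x,x))`,
the scaled diagonal `K^{(l)}(x,x)/c_l → v_x²` and in fact
`K^{(l)}(x,x')/c_l → v_x v_{x'}` for all pairs, i.e. `K^{(l)}/c_l → v vᵀ`. -/
theorem mlp_cov_scaled_tendsto_rank_one {N : ℕ} (σb2 σw2 : ℝ)
    (hσw : 2 < σw2) (hσb : 0 ≤ σb2)
    (K : ℕ → Matrix (Fin N) (Fin N) ℝ) (hK0 : (K 0).PosSemidef)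
    (hrec : ∀ l x x', K (l + 1) x x' =
      σb2 + (σw2 / 2) * Real.sqrt (K l x x) * Real.sqrt (K l x' x') *
        arcCosCorr (K l x x' / (Real.sqrt (K l x x) * Real.sqrt (K l x' x'))))
    (v : Fin N → ℝ)
    (hv : ∀ x, v x = Real.sqrt (σb2 / (σw2 / 2 - 1) + K 0 x x)) :
    (∀ x, Filter.Tendsto (fun l => K l x x / (σw2 / 2) ^ l) Filter.atTop
      (nhds (v x ^ 2))) ∧
    (∀ x x', Filter.Tendsto (fun l => K l x x' / (σw2 / 2) ^ l) Filter.atTop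
      (nhds (v x * v x'))) := by
  set a : ℝ := σw2 / 2 with ha_def
  have ha : 1 < a := by rw [ha_def]; linarith
  have ha0 : 0 < a := by linarith
  have hane : a - 1 ≠ 0 := by intro h; rw [sub_eq_zero] at h; exact absurd h.symm ha.ne
  have hapow : ∀ l : ℕ, (0:ℝ) < a ^ l := fun l => pow_pos ha0 l
  set d : ℝ := σb2 / (a - 1) with hd_def
  have hd : 0 ≤ d := div_nonneg hσb (by linarith)
  have hσd : σb2 = (a - 1) * d := by
    rw [hd_def, mul_div_assoc', mul_comm, mul_div_assoc, div_self hane, mul_one]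
  -- base Cauchy-Schwarz
  have hcs0 : ∀ x x', (K 0 x x') ^ 2 ≤ K 0 x x * K 0 x' x' := by
    intro x x'
    have hsym : K 0 x' x = K 0 x x' := by
      have := hK0.1.apply x x'
      simpa using this
    have hq : ∀ t : ℝ, 0 ≤ K 0 x x * (t * t) + (2 * K 0 x x') * t + K 0 x' x' := by
      intro t
      have h0 := hK0.dotProduct_mulVec_nonneg (t • (Pi.single x 1 : Fin N → ℝ) + (Pi.single x' 1 : Fin N → ℝ))
      simp only [star_trivial, Matrix.mulVec_add, Matrix.mulVec_smul,
        dotProduct_add, add_dotProduct, smul_dotProduct,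
        dotProduct_smul, Matrix.mulVec_single, single_dotProduct,
        dotProduct_single, mul_one, smul_eq_mul] at h0
      simp only [Matrix.col_apply, MulOpposite.op_one, one_smul, one_mul] at h0
      rw [hsym] at h0; nlinarith [h0]
    have hdisc := discrim_le_zero hq
    rw [discrim] at hdisc
    nlinarith [hdisc]
  have hdiag0 : ∀ x, 0 ≤ K 0 x x := by
    intro x
    have h0 := hK0.dotProduct_mulVec_nonneg (Pi.single x 1 : Fin N → ℝ)
    simpa using h0
  -- diagonal step
  have hstep_diag : ∀ l x, 0 ≤ K l x x → K (l + 1) x x = σb2 + a * K l x x := by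
    intro l x hu
    rw [hrec l x x]
    rcases eq_or_lt_of_le hu with h0 | hpos
    · rw [← h0]; simp
    · have h1 : Real.sqrt (K l x x) * Real.sqrt (K l x x) = K l x x :=
        Real.mul_self_sqrt hu
      rw [h1, div_self hpos.ne', arcCosCorr_one, mul_one, mul_assoc, h1]
  -- explicit diagonal formula
  have hKdiag : ∀ l x, K l x x = (d + K 0 x x) * a ^ l - d := by
    intro l x
    induction l with
    | zero => simp
    | succ l ih =>
      have h1 : (1:ℝ) ≤ a ^ l := one_le_pow₀ ha.le
      have hnn : 0 ≤ K l x x := by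
        rw [ih]; nlinarith [hdiag0 x, hd]
      rw [hstep_diag l x hnn, ih, hσd, pow_succ]
      ring
  have hKnn : ∀ l x, 0 ≤ K l x x := by
    intro l x
    have h1 : (1:ℝ) ≤ a ^ l := one_le_pow₀ ha.le
    rw [hKdiag]; nlinarith [hdiag0 x, hd]
  have hbnn : ∀ x, (0:ℝ) ≤ d + K 0 x x := fun x => by linarith [hdiag0 x, hd]
  have hvsq : ∀ x, v x ^ 2 = d + K 0 x x := by
    intro x; rw [hv x]; exact Real.sq_sqrt (hbnn x)
  have hvnn : ∀ x, 0 ≤ v x := fun x => by rw [hv x]; exact Real.sqrt_nonneg _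
  -- Cauchy-Schwarz at every level
  have hcs : ∀ l x x', (K l x x') ^ 2 ≤ K l x x * K l x' x' := by
    intro l
    induction l with
    | zero => exact hcs0
    | succ l ih =>
      intro x x'
      rw [hrec l x x', hstep_diag l x (hKnn l x), hstep_diag l x' (hKnn l x')]
      obtain ⟨s, hs_def⟩ : ∃ s, Real.sqrt (K l x x) = s := ⟨_, rfl⟩
      obtain ⟨s', hs'_def⟩ : ∃ s', Real.sqrt (K l x' x') = s' := ⟨_, rfl⟩
      rw [hs_def, hs'_def]
      have hs : 0 ≤ s := hs_def ▸ Real.sqrt_nonneg _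
      have hs' : 0 ≤ s' := hs'_def ▸ Real.sqrt_nonneg _
      have hsq : s ^ 2 = K l x x := by rw [← hs_def]; exact Real.sq_sqrt (hKnn l x)
      have hsq' : s' ^ 2 = K l x' x' := by rw [← hs'_def]; exact Real.sq_sqrt (hKnn l x')
      rw [← hsq, ← hsq']
      have hss : (K l x x') ^ 2 ≤ (s * s') ^ 2 := by
        rw [mul_pow, hsq, hsq']; exact ih x x'
      have habs1 : K l x x' ≤ s * s' := by nlinarith [mul_nonneg hs hs']
      have hρ2 : K l x x' / (s * s') ≤ 1 := by
        rcases eq_or_lt_of_le (mul_nonneg hs hs') with h0 | hpos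
        · rw [← h0]; simp
        · rw [div_le_one hpos]; linarith
      have hρ1 : -1 ≤ K l x x' / (s * s') := by
        rcases eq_or_lt_of_le (mul_nonneg hs hs') with h0 | hpos
        · rw [← h0]; simp
        · rw [le_div_iff₀ hpos]; nlinarith [mul_nonneg hs hs']
      have hf0 := arcCosCorr_nonneg hρ1 hρ2
      have hf1 := arcCosCorr_le_one hρ2
      have e1 : (σb2 + a * s * s' * arcCosCorr (K l x x' / (s * s'))) ^ 2 ≤
          (σb2 + a * (s * s')) ^ 2 := by
        have hterm0 : 0 ≤ a * s * s' * arcCosCorr (K l x x' / (s * s')) := by positivity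
        have hterm1 : a * s * s' * arcCosCorr (K l x x' / (s * s')) ≤ a * (s * s') := by
          nlinarith [mul_nonneg (mul_nonneg ha0.le hs) hs']
        nlinarith
      have e2 : (σb2 + a * (s * s')) ^ 2 ≤ (σb2 + a * s ^ 2) * (σb2 + a * s' ^ 2) := by
        nlinarith [mul_nonneg (mul_nonneg hσb ha0.le) (sq_nonneg (s - s')),
          mul_nonneg (mul_nonneg (mul_nonneg ha0.le ha0.le) (mul_nonneg hs hs'))
            (mul_nonneg hs hs')]
      exact e1.trans e2
  -- monotonicity step
  have hmono : ∀ l x x', a * K l x x' ≤ K (l + 1) x x' := by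
    intro l x x'
    rw [hrec l x x']
    obtain ⟨s, hs_def⟩ : ∃ s, Real.sqrt (K l x x) = s := ⟨_, rfl⟩
    obtain ⟨s', hs'_def⟩ : ∃ s', Real.sqrt (K l x' x') = s' := ⟨_, rfl⟩
    rw [hs_def, hs'_def]
    have hs : 0 ≤ s := hs_def ▸ Real.sqrt_nonneg _
    have hs' : 0 ≤ s' := hs'_def ▸ Real.sqrt_nonneg _
    have hsq : s ^ 2 = K l x x := by rw [← hs_def]; exact Real.sq_sqrt (hKnn l x)
    have hsq' : s' ^ 2 = K l x' x' := by rw [← hs'_def]; exact Real.sq_sqrt (hKnn l x')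
    have hss : (K l x x') ^ 2 ≤ (s * s') ^ 2 := by
      rw [mul_pow, hsq, hsq']; exact hcs l x x'
    rcases eq_or_lt_of_le (mul_nonneg hs hs') with h0 | hpos
    · have hK0' : K l x x' = 0 := by nlinarith
      rw [hK0']
      rcases mul_eq_zero.mp h0.symm with h | h
      · rw [h]
        simp only [mul_zero, zero_mul, add_zero]
        exact hσb
      · rw [h]
        simp only [mul_zero, zero_mul, add_zero]
        exact hσb
    · have hρ1 : -1 ≤ K l x x' / (s * s') := by
        rw [le_div_iff₀ hpos]; nlinarith
      have hρ2 : K l x x' / (s * s') ≤ 1 := by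
        rw [div_le_one hpos]; nlinarith
      have hfρ := le_arcCosCorr hρ1 hρ2
      have key : a * s * s' * (K l x x' / (s * s')) ≤
          a * s * s' * arcCosCorr (K l x x' / (s * s')) :=
        mul_le_mul_of_nonneg_left hfρ (by positivity)
      have hcancel : a * s * s' * (K l x x' / (s * s')) = a * K l x x' := by
        have hs0 : s ≠ 0 := by rintro rfl; simp at hpos
        have hs0' : s' ≠ 0 := by rintro rfl; simp at hpos
        field_simp
      rw [hcancel] at key
      linarith
  -- uniform bounds
  have hub : ∀ l x x', K l x x' ≤ v x * v x' * a ^ l ∧ -(v x * v x' * a ^ l) ≤ K l x x' := by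
    intro l x x'
    have h1 : K l x x ≤ (v x ^ 2) * a ^ l := by
      rw [hKdiag, hvsq]; nlinarith [hapow l]
    have h1' : K l x' x' ≤ (v x' ^ 2) * a ^ l := by
      rw [hKdiag, hvsq]; nlinarith [hapow l]
    have hmm : K l x x * K l x' x' ≤ ((v x ^ 2) * a ^ l) * ((v x' ^ 2) * a ^ l) :=
      mul_le_mul h1 h1' (hKnn l x') (mul_nonneg (sq_nonneg _) (hapow l).le)
    have h2 : (K l x x') ^ 2 ≤ (v x * v x' * a ^ l) ^ 2 := by
      have h3 : ((v x ^ 2) * a ^ l) * ((v x' ^ 2) * a ^ l) = (v x * v x' * a ^ l) ^ 2 := by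
        ring
      rw [← h3]
      exact le_trans (hcs l x x') hmm
    have h3 : 0 ≤ v x * v x' * a ^ l :=
      mul_nonneg (mul_nonneg (hvnn x) (hvnn x')) (hapow l).le
    constructor <;> nlinarith
  -- diagonal convergence
  have hdiagT : ∀ y, Filter.Tendsto (fun l => K l y y / a ^ l) Filter.atTop (nhds (v y ^ 2)) := by
    intro y
    have heq : ∀ l, K l y y / a ^ l = (d + K 0 y y) - d * (1 / a) ^ l := by
      intro l
      have hdl : d * (1 / a) ^ l = d / a ^ l := by
        rw [one_div, inv_pow, div_eq_mul_inv]
      rw [hKdiag, hdl, sub_div, mul_div_assoc, div_self (hapow l).ne', mul_one]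
    have h0 : Filter.Tendsto (fun l : ℕ => (1 / a) ^ l) Filter.atTop (nhds 0) :=
      tendsto_pow_atTop_nhds_zero_of_lt_one (by positivity) (by rw [div_lt_one ha0]; exact ha)
    have h1 := Filter.Tendsto.const_sub (d + K 0 y y) (h0.const_mul d)
    rw [mul_zero, sub_zero] at h1
    rw [hvsq y]
    exact h1.congr (fun l => (heq l).symm)
  -- pairwise convergence
  have key : ∀ x x', Filter.Tendsto (fun l => K l x x' / a ^ l) Filter.atTop
      (nhds (v x * v x')) := by
    intro x x'
    have hgub : ∀ l, K l x x' / a ^ l ≤ v x * v x' := by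
      intro l
      rw [div_le_iff₀ (hapow l)]
      exact (hub l x x').1
    have hglb : ∀ l, -(v x * v x') ≤ K l x x' / a ^ l := by
      intro l
      rw [le_div_iff₀ (hapow l)]
      calc -(v x * v x') * a ^ l = -(v x * v x' * a ^ l) := by ring
        _ ≤ K l x x' := (hub l x x').2
    rcases eq_or_lt_of_le (mul_nonneg (hvnn x) (hvnn x')) with hvv0 | hvv
    · have hzero : ∀ l, K l x x' / a ^ l = 0 := by
        intro l
        have h1 := hgub l
        have h2 := hglb l
        rw [← hvv0] at h1 h2
        linarith
      rw [← hvv0]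
      exact tendsto_const_nhds.congr (fun l => (hzero l).symm)
    · have hgmono : Monotone (fun l => K l x x' / a ^ l) := by
        apply monotone_nat_of_le_succ
        intro l
        show K l x x' / a ^ l ≤ K (l + 1) x x' / a ^ (l + 1)
        rw [div_le_div_iff₀ (hapow l) (hapow (l + 1)), pow_succ]
        nlinarith [mul_le_mul_of_nonneg_right (hmono l x x') (hapow l).le]
      rcases tendsto_of_monotone hgmono with htop | ⟨c, hc⟩
      · exfalso
        obtain ⟨l, hl⟩ := (Filter.tendsto_atTop.mp htop (v x * v x' + 1)).exists
        have h4 := hgub l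
        have hl' : v x * v x' + 1 ≤ K l x x' / a ^ l := hl
        linarith
      · have hcub : c ≤ v x * v x' :=
          le_of_tendsto hc (Filter.Eventually.of_forall hgub)
        have hclb : -(v x * v x') ≤ c :=
          ge_of_tendsto hc (Filter.Eventually.of_forall hglb)
        -- scaled recursion identity
        have hid : ∀ l, K (l + 1) x x' / a ^ (l + 1) = σb2 * (1 / a) ^ (l + 1) +
            Real.sqrt (K l x x / a ^ l) * Real.sqrt (K l x' x' / a ^ l) *
              arcCosCorr ((K l x x' / a ^ l) /
                (Real.sqrt (K l x x / a ^ l) * Real.sqrt (K l x' x' / a ^ l))) := by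
          intro l
          have hq0 : (0:ℝ) < Real.sqrt (a ^ l) := Real.sqrt_pos.mpr (hapow l)
          have hqq : Real.sqrt (a ^ l) * Real.sqrt (a ^ l) = a ^ l :=
            Real.mul_self_sqrt (hapow l).le
          have h1 : Real.sqrt (K l x x / a ^ l) = Real.sqrt (K l x x) / Real.sqrt (a ^ l) :=
            Real.sqrt_div (hKnn l x) _
          have h1' : Real.sqrt (K l x' x' / a ^ l) = Real.sqrt (K l x' x') / Real.sqrt (a ^ l) :=
            Real.sqrt_div (hKnn l x') _
          have harg : (K l x x' / a ^ l) /
              (Real.sqrt (K l x x / a ^ l) * Real.sqrt (K l x' x' / a ^ l)) =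
              K l x x' / (Real.sqrt (K l x x) * Real.sqrt (K l x' x')) := by
            rw [h1, h1', div_mul_div_comm, hqq]
            exact div_div_div_cancel_right₀ (hapow l).ne' _ _
          rw [hrec l x x', harg, h1, h1']
          obtain ⟨F, hF_def⟩ : ∃ F,
              arcCosCorr (K l x x' / (Real.sqrt (K l x x) * Real.sqrt (K l x' x'))) = F :=
            ⟨_, rfl⟩
          rw [hF_def]
          rw [pow_succ, ← hqq]
          field_simp
          simp only [Real.sqrt_sq hq0.le, Real.sq_sqrt (hapow l).le]
          field_simp
          have e1 : a * a⁻¹ = 1 := mul_inv_cancel₀ ha0.ne'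
          have e2 : a ^ l * a⁻¹ ^ l = 1 := by rw [← mul_pow, e1, one_pow]
          linear_combination (-σb2 * (a ^ l * a⁻¹ ^ l)) * e1 + (-σb2) * e2
        -- limits of the pieces
        have h0 : Filter.Tendsto (fun l : ℕ => (1 / a) ^ l) Filter.atTop (nhds 0) :=
          tendsto_pow_atTop_nhds_zero_of_lt_one (by positivity) (by rw [div_lt_one ha0]; exact ha)
        have hT1 : Filter.Tendsto (fun l : ℕ => σb2 * (1 / a) ^ (l + 1)) Filter.atTop (nhds 0) := by
          have h2 := (h0.comp (Filter.tendsto_add_atTop_nat 1)).const_mul σb2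
          rw [mul_zero] at h2
          exact h2
        have hsxT : Filter.Tendsto (fun l => Real.sqrt (K l x x / a ^ l)) Filter.atTop
            (nhds (v x)) := by
          have h2 := (Real.continuous_sqrt.tendsto _).comp (hdiagT x)
          rwa [Real.sqrt_sq (hvnn x)] at h2
        have hsxT' : Filter.Tendsto (fun l => Real.sqrt (K l x' x' / a ^ l)) Filter.atTop
            (nhds (v x')) := by
          have h2 := (Real.continuous_sqrt.tendsto _).comp (hdiagT x')
          rwa [Real.sqrt_sq (hvnn x')] at h2
        have hprod := hsxT.mul hsxT'
        have hargT := hc.div hprod hvv.ne'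
        have hFT := (continuous_arcCosCorr.tendsto _).comp hargT
        have hRHS := hT1.add (hprod.mul hFT)
        rw [zero_add] at hRHS
        have hLHS : Filter.Tendsto (fun l => K (l + 1) x x' / a ^ (l + 1)) Filter.atTop
            (nhds c) := hc.comp (Filter.tendsto_add_atTop_nat 1)
        have heq : c = v x * v x' * arcCosCorr (c / (v x * v x')) :=
          tendsto_nhds_unique hLHS (hRHS.congr (fun l => (hid l).symm))
        -- fixed point argument
        have hρ2 : c / (v x * v x') ≤ 1 := by rw [div_le_one hvv]; exact hcub
        have hρ1 : -1 ≤ c / (v x * v x') := by rw [le_div_iff₀ hvv]; linarith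
        have hfρ : arcCosCorr (c / (v x * v x')) = c / (v x * v x') := by
          conv_rhs => rw [heq]
          rw [mul_div_cancel_left₀ _ hvv.ne']
        have hρone : c / (v x * v x') = 1 := by
          by_contra hne
          have hlt := lt_arcCosCorr hρ1 (lt_of_le_of_ne hρ2 hne)
          rw [hfρ] at hlt
          exact lt_irrefl _ hlt
        have hcvv : c = v x * v x' := by
          rw [div_eq_one_iff_eq hvv.ne'] at hρone
          exact hρone
        rwa [hcvv] at hc
  refine ⟨fun x => ?_, key⟩
  have h := key x x
  rwa [show v x * v x = v x ^ 2 by ring] at h
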